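/- (Rado's inequality.) Let G be a subgroup of the symmetric group Sₙ, let a ∈ ℝⁿ be a nonnegative vector, and let K_G(a) be the convex hull in ℝⁿ of the finite set {γa : γ ∈ G}, where (γa)_i = a_{γ⁻¹(i)}. If b ∈ K_G(a), then [x^b]_G ≤ [x^a]_G for every positive vector x ∈ ℝⁿ. -/

import Mathlib

open Finset Real

theorem stmt_14 (n : ℕ) (G : Subgroup (Equiv.Perm (Fin n))) [DecidablePred (· ∈ G)]
    (a b : Fin n → ℝ) (ha : ∀ i, 0 ≤ a i)
    (hb : b ∈ convexHull ℝ
      {z : Fin n → ℝ | ∃ γ ∈ G, z = fun i => a (γ⁻¹ i)})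
    (x : Fin n → ℝ) (hx : ∀ i, 0 < x i) :
    (1 / (Fintype.card G : ℝ)) * ∑ σ : G, ∏ i, x ((σ : Equiv.Perm (Fin n)) i) ^ b i
      ≤ (1 / (Fintype.card G : ℝ)) * ∑ σ : G, ∏ i, x ((σ : Equiv.Perm (Fin n)) i) ^ a i := by
  set f : (Fin n → ℝ) → ℝ :=
    fun c => ∑ σ : G, ∏ i, x ((σ : Equiv.Perm (Fin n)) i) ^ c i with hf
  -- each summand equals exp of a linear functional
  have hterm : ∀ (σ : G) (c : Fin n → ℝ),
      (∏ i, x ((σ : Equiv.Perm (Fin n)) i) ^ c i) =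
        Real.exp (∑ i, Real.log (x ((σ : Equiv.Perm (Fin n)) i)) * c i) := by
    intro σ c
    rw [Real.exp_sum]
    exact Finset.prod_congr rfl fun i _ => Real.rpow_def_of_pos (hx _) _
  -- convexity of f
  have hconv : ConvexOn ℝ (Set.univ : Set (Fin n → ℝ)) f := by
    have : ∀ σ : G, ConvexOn ℝ (Set.univ : Set (Fin n → ℝ))
        (fun c => ∏ i, x ((σ : Equiv.Perm (Fin n)) i) ^ c i) := by
      intro σ
      have h := convexOn_exp.comp_affineMap
        ((LinearMap.lsum ℝ (fun _ : Fin n => ℝ) ℝ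
          (fun i => LinearMap.id.smulRight (Real.log (x ((σ : Equiv.Perm (Fin n)) i))))).toAffineMap)
      have : ConvexOn ℝ (Set.univ : Set (Fin n → ℝ))
          (fun c => Real.exp (∑ i, Real.log (x ((σ : Equiv.Perm (Fin n)) i)) * c i)) := by
        refine (h.subset (by simp) convex_univ).congr ?_
        intro c _
        simp [LinearMap.lsum_apply, mul_comm]
      exact this.congr (by intro c _; exact (hterm σ c).symm)
    -- sum of convex functions
    have := Finset.sum_induction
      (fun σ : G => fun c : Fin n → ℝ => ∏ i, x ((σ : Equiv.Perm (Fin n)) i) ^ c i)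
      (fun g => ConvexOn ℝ (Set.univ : Set (Fin n → ℝ)) g)
      (fun g h hg hh => hg.add hh) (convexOn_const 0 convex_univ)
      (fun σ _ => this σ) (s := Finset.univ)
    exact this.congr (by intro c _; simp [hf])
  -- invariance of f under G
  have hinv : ∀ γ ∈ G, f (fun i => a (γ⁻¹ i)) = f a := by
    intro γ hγ
    simp only [hf]
    refine (Fintype.sum_equiv (Equiv.mulRight (⟨γ, hγ⟩ : G)) _ _ ?_)
    intro σ
    refine (Fintype.prod_equiv γ⁻¹ _ _ ?_)
    intro i
    simp
  -- maximum principle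
  obtain ⟨z, hz, hfz⟩ := hconv.exists_ge_of_mem_convexHull (Set.subset_univ _) hb
  obtain ⟨γ, hγ, rfl⟩ := hz
  have : f b ≤ f a := by rw [← hinv γ hγ]; exact hfz
  have hcard : (0:ℝ) ≤ 1 / (Fintype.card G : ℝ) := by positivity
  exact mul_le_mul_of_nonneg_left this hcard
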